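/- arXiv:1207.5764 — 2 statements merged into one kernel-verified Lean document; each statement's English description precedes it below -/
import Mathlib

section
/- For every integer m ≥ 0 and every nonzero complex number x, one has |F_m(x)|² = F_m(x)·F_m(x̄) < F_m(0)·F_m(x+x̄), where F_m(t) = ∫₀¹ e^{ty} y^m dy. -/
open MeasureTheory Set Complex

/-- `F m t = ∫₀¹ e^{t y} y^m dy`. -/
noncomputable def F (m : ℕ) (t : ℂ) : ℂ := ∫ y in (0:ℝ)..1, Complex.exp (t * y) * (y : ℂ) ^ m

/-- For every `m ≥ 0` and nonzero complex `x`,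
`|F_m(x)|² = F_m(x)·F_m(x̄) < F_m(0)·F_m(x+x̄)`. -/
theorem stmt0 (m : ℕ) (x : ℂ) (hx : x ≠ 0) :
    F m x * F m (starRingEnd ℂ x) = (‖F m x‖ ^ 2 : ℝ) ∧
    ‖F m x‖ ^ 2 < (F m 0 * F m (x + starRingEnd ℂ x)).re := by
  have hconj : F m (starRingEnd ℂ x) = starRingEnd ℂ (F m x) := by
    rw [F, F, intervalIntegral.integral_of_le zero_le_one,
      intervalIntegral.integral_of_le zero_le_one, ← integral_conj]
    refine integral_congr_ae (Filter.Eventually.of_forall fun y => ?_)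
    simp [← Complex.exp_conj, Complex.conj_ofReal]
  have part1 : F m x * F m (starRingEnd ℂ x) = (‖F m x‖ ^ 2 : ℝ) := by
    rw [hconj, Complex.mul_conj]
    norm_cast
    exact (Complex.sq_norm _).symm
  refine ⟨part1, ?_⟩
  -- setup
  set μ : Measure ℝ := volume.restrict (Set.Ioc (0:ℝ) 1) with hμdef
  have hFset : ∀ t : ℂ, F m t = ∫ y, Complex.exp (t*y) * (y:ℂ)^m ∂μ := fun t => by
    rw [F, intervalIntegral.integral_of_le zero_le_one]
  set f : ℝ → ℂ := fun y => Complex.exp (x*y) * (Real.sqrt (y^m) : ℂ) with hfdef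
  set g : ℝ → ℂ := fun y => ((Real.sqrt (y^m) : ℝ) : ℂ) with hgdef
  have hfc : Continuous f := by fun_prop
  have hgc : Continuous g := by fun_prop
  have hμIoc : ∀ᵐ y ∂μ, y ∈ Set.Ioc (0:ℝ) 1 := ae_restrict_mem measurableSet_Ioc
  -- helper : an a.e. (μ) property that fails on all of Ioc 0 1 up to a countable set gives False
  have contra : ∀ (Q : ℝ → Prop), (∀ᵐ y ∂μ, Q y) → ({y : ℝ | Q y}).Countable → False := by
    intro Q hQ hc
    have hv : (volume : Measure ℝ) {y | Q y} = 0 := hc.measure_zero volume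
    have h0 : ∀ᵐ y ∂μ, ¬ Q y := ae_restrict_of_ae (ae_iff.2 (by simpa using hv))
    have : ∀ᵐ _y ∂μ, False := by filter_upwards [hQ, h0] with y h1 h2; exact h2 h1
    have hz : μ Set.univ = 0 := by simpa [ae_iff] using this
    rw [hμdef, Measure.restrict_apply_univ] at hz
    simp [Real.volume_Ioc] at hz
  have hsqrt_pos : ∀ y ∈ Set.Ioc (0:ℝ) 1, 0 < Real.sqrt (y^m) := fun y hy =>
    Real.sqrt_pos.2 (pow_pos hy.1 m)
  -- MemLp
  have hbound : ∀ y ∈ Set.Ioc (0:ℝ) 1, ‖f y‖ ≤ Real.exp ‖x‖ := by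
    intro y hy
    have h1 : ‖Complex.exp (x*y)‖ ≤ Real.exp ‖x‖ := by
      rw [Complex.norm_exp]
      refine Real.exp_le_exp.2 ?_
      calc (x*y).re ≤ ‖x*y‖ := Complex.re_le_norm _
        _ = ‖x‖ * |y| := by rw [norm_mul, Complex.norm_real, Real.norm_eq_abs]
        _ ≤ ‖x‖ * 1 := by
            refine mul_le_mul_of_nonneg_left ?_ (norm_nonneg x)
            rw [abs_of_pos hy.1]; exact hy.2
        _ = ‖x‖ := mul_one _
    have h2 : ‖((Real.sqrt (y^m) : ℝ) : ℂ)‖ ≤ 1 := by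
      rw [Complex.norm_real, Real.norm_eq_abs, _root_.abs_of_nonneg (Real.sqrt_nonneg _)]
      exact Real.sqrt_le_one.2 (pow_le_one₀ hy.1.le hy.2)
    calc ‖f y‖ = ‖Complex.exp (x*y)‖ * ‖((Real.sqrt (y^m):ℝ):ℂ)‖ := norm_mul _ _
      _ ≤ Real.exp ‖x‖ * 1 := mul_le_mul h1 h2 (norm_nonneg _) (Real.exp_nonneg _)
      _ = _ := mul_one _
  have hfm : MemLp f 2 μ :=
    MemLp.of_bound hfc.aestronglyMeasurable.restrict _
      (by filter_upwards [hμIoc] with y hy using hbound y hy)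
  have hgm : MemLp g 2 μ :=
    MemLp.of_bound hgc.aestronglyMeasurable.restrict 1
      (by
        filter_upwards [hμIoc] with y hy
        rw [hgdef]
        simp only [Complex.norm_real, Real.norm_eq_abs, _root_.abs_of_nonneg (Real.sqrt_nonneg _)]
        exact Real.sqrt_le_one.2 (pow_le_one₀ hy.1.le hy.2))
  set f2 : Lp ℂ 2 μ := hfm.toLp f with hf2def
  set g2 : Lp ℂ 2 μ := hgm.toLp g with hg2def
  -- inner products
  have sq_sqrt : ∀ y ∈ Set.Ioc (0:ℝ) 1,
      ((Real.sqrt (y^m) :ℝ):ℂ) * ((Real.sqrt (y^m):ℝ):ℂ) = (y:ℂ)^m := by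
    intro y hy
    rw [← Complex.ofReal_mul, Real.mul_self_sqrt (pow_nonneg hy.1.le m)]
    push_cast; ring
  have key1 : (inner ℂ f2 g2 : ℂ) = F m (starRingEnd ℂ x) := by
    rw [MeasureTheory.L2.inner_def, hFset]
    refine integral_congr_ae ?_
    filter_upwards [hμIoc, hfm.coeFn_toLp, hgm.coeFn_toLp] with y hy hf hg
    rw [hf2def, hg2def, hf, hg, RCLike.inner_apply, hfdef, hgdef]
    simp only [map_mul, ← Complex.exp_conj, Complex.conj_ofReal, map_mul, Complex.conj_ofReal]
    rw [mul_left_comm, sq_sqrt y hy]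
  have key2 : (inner ℂ f2 f2 : ℂ) = F m (x + starRingEnd ℂ x) := by
    rw [MeasureTheory.L2.inner_def, hFset]
    refine integral_congr_ae ?_
    filter_upwards [hμIoc, hfm.coeFn_toLp] with y hy hf
    rw [hf2def, hf, RCLike.inner_apply, hfdef]
    simp only [map_mul, ← Complex.exp_conj, Complex.conj_ofReal]
    rw [add_mul, Complex.exp_add, ← sq_sqrt y hy]; ring
  have key3 : (inner ℂ g2 g2 : ℂ) = F m 0 := by
    rw [MeasureTheory.L2.inner_def, hFset]
    refine integral_congr_ae ?_
    filter_upwards [hμIoc, hgm.coeFn_toLp] with y hy hg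
    rw [hg2def, hg, RCLike.inner_apply, hgdef]
    simp only [Complex.conj_ofReal]
    rw [sq_sqrt y hy]
    simp
  have aefalse : ¬ (∀ᵐ _y ∂μ, False) := by
    intro h
    have hz : μ Set.univ = 0 := by simpa [ae_iff] using h
    rw [hμdef, Measure.restrict_apply_univ] at hz
    simp [Real.volume_Ioc] at hz
  have hsne : ∀ y ∈ Set.Ioc (0:ℝ) 1, ((Real.sqrt (y^m) : ℝ) : ℂ) ≠ 0 := by
    intro y hy h
    exact (hsqrt_pos y hy).ne' (by exact_mod_cast h)
  have hf2ne : f2 ≠ 0 := by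
    intro h
    have h1 : f =ᵐ[μ] ⇑(0 : Lp ℂ 2 μ) := by
      rw [← h, hf2def]; exact hfm.coeFn_toLp.symm
    have hae : f =ᵐ[μ] 0 := h1.trans (Lp.coeFn_zero ℂ 2 μ)
    refine aefalse ?_
    filter_upwards [hae, hμIoc] with y h0 hy
    rw [hfdef] at h0
    simp only [Pi.zero_apply, mul_eq_zero] at h0
    rcases h0 with h0 | h0
    · exact Complex.exp_ne_zero _ h0
    · exact hsne y hy h0
  have hg2ne : g2 ≠ 0 := by
    intro h
    have h1 : g =ᵐ[μ] ⇑(0 : Lp ℂ 2 μ) := by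
      rw [← h, hg2def]; exact hgm.coeFn_toLp.symm
    have hae : g =ᵐ[μ] 0 := h1.trans (Lp.coeFn_zero ℂ 2 μ)
    refine aefalse ?_
    filter_upwards [hae, hμIoc] with y h0 hy
    rw [hgdef] at h0
    exact hsne y hy h0
  have hne : ‖(inner ℂ f2 g2 : ℂ)‖ ≠ ‖f2‖ * ‖g2‖ := by
    intro heq
    obtain ⟨r, hr, hg2eq⟩ := (norm_inner_eq_norm_iff (𝕜 := ℂ) hf2ne hg2ne).1 heq
    have hgr : g =ᵐ[μ] fun y => r * f y := by
      have h1 : g =ᵐ[μ] ⇑g2 := by rw [hg2def]; exact hgm.coeFn_toLp.symm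
      have h2 : ⇑g2 =ᵐ[μ] ⇑(r • f2) := by rw [hg2eq]
      have h3 : ⇑(r • f2) =ᵐ[μ] r • ⇑f2 := Lp.coeFn_smul r f2
      have h4 : ⇑f2 =ᵐ[μ] f := by rw [hf2def]; exact hfm.coeFn_toLp
      filter_upwards [h1, h2, h3, h4] with y e1 e2 e3 e4
      rw [e1, e2, e3, Pi.smul_apply, e4, smul_eq_mul]
    refine contra (fun y => Complex.exp (x * y) = r⁻¹) ?_ ?_
    · filter_upwards [hgr, hμIoc] with y hgy hy
      simp only [hfdef, hgdef] at hgy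
      have hs := hsne y hy
      have : (r * Complex.exp (x * y)) * ((Real.sqrt (y^m):ℝ):ℂ)
          = 1 * ((Real.sqrt (y^m):ℝ):ℂ) := by
        rw [one_mul]; linear_combination -hgy
      have h1 : r * Complex.exp (x * y) = 1 := mul_right_cancel₀ hs this
      exact eq_inv_of_mul_eq_one_left (by rw [mul_comm]; exact h1)
    · have hset : {y : ℝ | Complex.exp (x * y) = r⁻¹}
          = (fun y : ℝ => x * (y:ℂ)) ⁻¹' (Complex.exp ⁻¹' {r⁻¹}) := rfl
      rw [hset]
      exact ((Set.countable_singleton _).preimage_cexp).preimage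
        (fun a b hab => by exact_mod_cast mul_left_cancel₀ hx hab)
  have hlt : ‖(inner ℂ f2 g2 : ℂ)‖ < ‖f2‖ * ‖g2‖ :=
    lt_of_le_of_ne (norm_inner_le_norm f2 g2) hne
  have habs : ‖F m x‖ = ‖(inner ℂ f2 g2 : ℂ)‖ := by
    rw [key1, hconj, Complex.norm_conj]
  have hre : (F m 0 * F m (x + starRingEnd ℂ x)).re = ‖g2‖^2 * ‖f2‖^2 := by
    rw [← key3, ← key2, inner_self_eq_norm_sq_to_K, inner_self_eq_norm_sq_to_K]
    simp [← Complex.ofReal_pow, ← Complex.ofReal_mul]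
  rw [habs, hre]
  calc ‖(inner ℂ f2 g2 : ℂ)‖^2 < (‖f2‖ * ‖g2‖)^2 := by
        exact pow_lt_pow_left₀ hlt (norm_nonneg _) two_ne_zero
    _ = ‖g2‖^2 * ‖f2‖^2 := by ring
end

section
/- For every nonzero complex x and integer m ≥ 0, the 2×2 matrix G_m(x) = [[F_m(x+x̄), F_m(x)], [F_m(x̄), F_m(0)]] is invertible, where F_m(t) = ∫₀¹ e^{ty} y^m dy. -/
open MeasureTheory Complex Set
open scoped ComplexConjugate NNReal ENNReal

/-- The weighted measure `y^m dy` on `(0,1]`. -/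
noncomputable def Gmu (m : ℕ) : Measure ℝ :=
  (volume.restrict (Set.Ioc (0:ℝ) 1)).withDensity fun y => ENNReal.ofReal (y ^ m)

lemma Gmu_dens_meas (m : ℕ) : Measurable fun y : ℝ => ENNReal.ofReal (y ^ m) :=
  ENNReal.measurable_ofReal.comp (measurable_id.pow_const m)

/-- If two continuous functions agree a.e. w.r.t. the weighted measure, they agree on `(0,1)`. -/
lemma key (m : ℕ) {c d : ℝ → ℂ} (hc : Continuous c) (hd : Continuous d)
    (h : ∀ᵐ y ∂(Gmu m), c y = d y) : ∀ y ∈ Set.Ioo (0:ℝ) 1, c y = d y := by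
  rw [Gmu, ae_withDensity_iff (Gmu_dens_meas m)] at h
  rw [ae_restrict_iff' measurableSet_Ioc] at h
  by_contra hco
  push_neg at hco
  obtain ⟨y₀, hy₀, hne⟩ := hco
  set U : Set ℝ := Set.Ioo (0:ℝ) 1 ∩ {y | c y ≠ d y} with hU
  have hUopen : IsOpen U := isOpen_Ioo.inter (isOpen_ne_fun hc hd)
  have hU0 : volume U = 0 := by
    rw [ae_iff] at h
    refine measure_mono_null ?_ h
    intro y hy
    simp only [Set.mem_setOf_eq, not_forall]
    refine ⟨⟨hy.1.1.le.lt_of_ne ?_, hy.1.2.le⟩, ?_, hy.2⟩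
    · exact fun hcontra => (lt_irrefl _ (hcontra ▸ hy.1.1))
    · exact (ENNReal.ofReal_pos.mpr (pow_pos hy.1.1 m)).ne'
  have : (0:ℝ≥0∞) < volume U := hUopen.measure_pos volume ⟨y₀, hy₀, hne⟩
  exact this.ne' hU0

lemma F_eq_integral (m : ℕ) (t : ℂ) :
    F m t = ∫ y, Complex.exp (t * y) ∂(Gmu m) := by
  have hdens : (fun y : ℝ => ENNReal.ofReal (y ^ m))
      = fun y : ℝ => ((Real.toNNReal (y ^ m) : ℝ≥0) : ℝ≥0∞) := rfl
  rw [F, intervalIntegral.integral_of_le zero_le_one, Gmu, hdens,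
    integral_withDensity_eq_integral_smul (f := fun y : ℝ => (y ^ m).toNNReal)
      (measurable_real_toNNReal.comp (measurable_id.pow_const m)) _]
  refine (setIntegral_congr_fun measurableSet_Ioc fun y hy => ?_).symm
  have hy0 : (0:ℝ) ≤ y ^ m := pow_nonneg hy.1.le m
  rw [NNReal.smul_def, Real.coe_toNNReal _ hy0, Complex.real_smul, mul_comm]
  push_cast
  ring

instance Gmu_finite (m : ℕ) : IsFiniteMeasure (Gmu m) := by
  constructor
  rw [Gmu, withDensity_apply _ MeasurableSet.univ, Measure.restrict_univ]
  calc ∫⁻ y in Set.Ioc (0:ℝ) 1, ENNReal.ofReal (y ^ m)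
      ≤ ∫⁻ _ in Set.Ioc (0:ℝ) 1, 1 := by
        refine setLIntegral_mono measurable_const fun y hy => ?_
        exact ENNReal.ofReal_le_one.mpr (pow_le_one₀ hy.1.le hy.2)
    _ = volume (Set.Ioc (0:ℝ) 1) := by simp
    _ < ⊤ := by simp [Real.volume_Ioc]

lemma Gmu_ae_Ioc (m : ℕ) : ∀ᵐ y ∂(Gmu m), y ∈ Set.Ioc (0:ℝ) 1 :=
  (withDensity_absolutelyContinuous _ _).ae_le (ae_restrict_mem measurableSet_Ioc)

lemma memLp_exp (m : ℕ) (t : ℂ) :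
    MemLp (fun y : ℝ => Complex.exp (t * y)) 2 (Gmu m) := by
  refine MemLp.of_bound ?_ (Real.exp ‖t‖) ?_
  · exact (Complex.continuous_exp.comp (continuous_const.mul
      Complex.continuous_ofReal)).aestronglyMeasurable
  · filter_upwards [Gmu_ae_Ioc m] with y hy
    rw [Complex.norm_exp]
    refine Real.exp_le_exp.mpr ?_
    have h1 : (t * (y:ℂ)).re = t.re * y := by simp
    rw [h1]
    calc t.re * y ≤ |t.re * y| := le_abs_self _
      _ = |t.re| * |y| := abs_mul _ _
      _ ≤ ‖t‖ * 1 := by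
          refine mul_le_mul (Complex.abs_re_le_norm t) ?_ (abs_nonneg _) (norm_nonneg t)
          rw [abs_of_pos hy.1]; exact hy.2
      _ = ‖t‖ := mul_one _

/-- For nonzero `x`, the matrix `G_m(x) = [[F_m(x+x̄), F_m(x)],[F_m(x̄), F_m(0)]]` is invertible. -/
theorem stmt3 (m : ℕ) (x : ℂ) (hx : x ≠ 0) :
    IsUnit (!![F m (x + starRingEnd ℂ x), F m x; F m (starRingEnd ℂ x), F m 0]) := by
  classical
  set μ := Gmu m with hμ
  set f : ℝ → ℂ := fun y => Complex.exp (x * y) with hf_def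
  set g : ℝ → ℂ := fun _ => (1:ℂ) with hg_def
  have hf : MemLp f 2 μ := memLp_exp m x
  have hg : MemLp g 2 μ := by
    have := memLp_exp m 0
    simpa [hg_def] using this
  set fL : Lp ℂ 2 μ := hf.toLp f with hfL
  set gL : Lp ℂ 2 μ := hg.toLp g with hgL
  -- inner products
  have hfc : (fL : ℝ → ℂ) =ᵐ[μ] f := hf.coeFn_toLp
  have hgc : (gL : ℝ → ℂ) =ᵐ[μ] g := hg.coeFn_toLp
  have hIfg : inner ℂ fL gL = (starRingEnd ℂ) (F m x) := by
    rw [L2.inner_def]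
    have hae : (fun y => (inner ℂ ((fL : ℝ → ℂ) y) ((gL : ℝ → ℂ) y) : ℂ))
        =ᵐ[μ] fun y => (starRingEnd ℂ) (f y) * g y := by
      filter_upwards [hfc, hgc] with y h1 h2
      rw [h1, h2]; simp only [RCLike.inner_apply]; ring
    rw [integral_congr_ae hae]
    simp only [hg_def, mul_one]
    rw [integral_conj, F_eq_integral]
  have hIff : inner ℂ fL fL = F m (x + starRingEnd ℂ x) := by
    rw [L2.inner_def]
    have hae : (fun y => (inner ℂ ((fL : ℝ → ℂ) y) ((fL : ℝ → ℂ) y) : ℂ))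
        =ᵐ[μ] fun y => (starRingEnd ℂ) (f y) * f y := by
      filter_upwards [hfc] with y h1
      rw [h1]; simp only [RCLike.inner_apply]; ring
    rw [integral_congr_ae hae, F_eq_integral]
    refine integral_congr_ae (Filter.Eventually.of_forall fun y => ?_)
    rw [hf_def]
    simp only
    rw [← Complex.exp_conj, ← Complex.exp_add]
    congr 1
    rw [map_mul, Complex.conj_ofReal]
    ring
  have hIgg : inner ℂ gL gL = F m 0 := by
    rw [L2.inner_def]
    have hae : (fun y => (inner ℂ ((gL : ℝ → ℂ) y) ((gL : ℝ → ℂ) y) : ℂ))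
        =ᵐ[μ] fun y => (starRingEnd ℂ) (g y) * g y := by
      filter_upwards [hgc] with y h1
      rw [h1]; simp only [RCLike.inner_apply]; ring
    rw [integral_congr_ae hae, F_eq_integral]
    refine integral_congr_ae (Filter.Eventually.of_forall fun y => ?_)
    simp [hg_def]
  have hFconj : F m (starRingEnd ℂ x) = (starRingEnd ℂ) (F m x) := by
    rw [F_eq_integral, F_eq_integral, ← integral_conj]
    refine integral_congr_ae (Filter.Eventually.of_forall fun y => ?_)
    show Complex.exp ((starRingEnd ℂ) x * y) = (starRingEnd ℂ) (Complex.exp (x * y))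
    rw [← Complex.exp_conj, map_mul, Complex.conj_ofReal]
  -- strict Cauchy-Schwarz
  have hle : ‖(inner ℂ fL gL : ℂ)‖ ≤ ‖fL‖ * ‖gL‖ := norm_inner_le_norm fL gL
  have hne : ‖(inner ℂ fL gL : ℂ)‖ ≠ ‖fL‖ * ‖gL‖ := by
    intro heq
    have h3 := ((norm_inner_eq_norm_tfae (𝕜 := ℂ) fL gL).out 0 2).mp heq
    rcases h3 with h0 | ⟨r, hr⟩
    · -- fL = 0 : f = 0 a.e., contradiction with exp ≠ 0
      have hae : ∀ᵐ y ∂μ, f y = 0 := by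
        have h1 : (fL : ℝ → ℂ) =ᵐ[μ] f := hf.coeFn_toLp
        have h2 : (fL : ℝ → ℂ) =ᵐ[μ] 0 := by
          rw [h0]; exact Lp.coeFn_zero ..
        filter_upwards [h1, h2] with y hy1 hy2
        rw [← hy1, hy2]; rfl
      have := key m (Complex.continuous_exp.comp
        (continuous_const.mul Complex.continuous_ofReal)) continuous_const hae
        (1/2) (by norm_num)
      exact Complex.exp_ne_zero _ this
    · -- gL = r • fL : 1 = r * exp(x y) on (0,1)
      have hae : ∀ᵐ y : ℝ ∂μ, (1:ℂ) = r * Complex.exp (x * (y:ℂ)) := by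
        have h1 : (gL : ℝ → ℂ) =ᵐ[μ] g := hg.coeFn_toLp
        have h2 : ((r • fL : Lp ℂ 2 μ) : ℝ → ℂ) =ᵐ[μ] fun y => r • (fL : ℝ → ℂ) y :=
          Lp.coeFn_smul r fL
        have h3 : (fL : ℝ → ℂ) =ᵐ[μ] f := hf.coeFn_toLp
        filter_upwards [h1, h2, h3] with y hy1 hy2 hy3
        have : (gL : ℝ → ℂ) y = ((r • fL : Lp ℂ 2 μ) : ℝ → ℂ) y := by rw [hr]
        rw [hy1, hy2, hy3] at this
        simpa [hg_def, smul_eq_mul] using this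
      have heqIoo : ∀ y ∈ Set.Ioo (0:ℝ) 1, (1:ℂ) = r * Complex.exp (x * y) :=
        key m continuous_const
          (continuous_const.mul (Complex.continuous_exp.comp
            (continuous_const.mul Complex.continuous_ofReal))) hae
      -- derivative argument at y = 1/2
      have hrne : r ≠ 0 := by
        intro h0
        have := heqIoo (1/2) (by norm_num)
        rw [h0, zero_mul] at this
        exact one_ne_zero this
      have hd1 : HasDerivAt (fun y : ℝ => x * (y:ℂ)) x (1/2 : ℝ) := by
        simpa using (Complex.ofRealCLM.hasDerivAt (x := (1/2:ℝ))).const_mul x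
      have hd2 : HasDerivAt (fun y : ℝ => r * Complex.exp (x * y))
          (r * (Complex.exp (x * ((1:ℝ)/2 : ℝ)) * x)) (1/2 : ℝ) := (hd1.cexp).const_mul r
      have hd3 : HasDerivAt (fun y : ℝ => r * Complex.exp (x * y)) 0 (1/2 : ℝ) := by
        refine (hasDerivAt_const (1/2 : ℝ) (1:ℂ)).congr_of_eventuallyEq ?_
        filter_upwards [Ioo_mem_nhds (show (0:ℝ) < 1/2 by norm_num)
          (show (1/2:ℝ) < 1 by norm_num)] with y hy
        exact (heqIoo y hy).symm
      have := hd2.unique hd3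
      have hx0 : x = 0 := by
        rcases mul_eq_zero.mp this with h | h
        · exact absurd h hrne
        · rcases mul_eq_zero.mp h with h' | h'
          · exact absurd h' (Complex.exp_ne_zero _)
          · exact h'
      exact hx hx0
  have hlt : ‖(inner ℂ fL gL : ℂ)‖ < ‖fL‖ * ‖gL‖ := lt_of_le_of_ne hle hne
  -- determinant
  rw [Matrix.isUnit_iff_isUnit_det, Matrix.det_fin_two_of, isUnit_iff_ne_zero]
  have hdet : F m (x + starRingEnd ℂ x) * F m 0 - F m x * F m (starRingEnd ℂ x)
      = ((((‖fL‖ * ‖gL‖)^2 : ℝ) : ℂ) - ((‖(inner ℂ fL gL : ℂ)‖^2 : ℝ) : ℂ)) := by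
    rw [← hIff, ← hIgg, hFconj, ← hIfg]
    have hx1 : F m x = (starRingEnd ℂ) (inner ℂ fL gL : ℂ) := by
      rw [hIfg, Complex.conj_conj]
    rw [hx1]
    rw [inner_self_eq_norm_sq_to_K, inner_self_eq_norm_sq_to_K]
    have h2 : (starRingEnd ℂ) (inner ℂ fL gL : ℂ) * (inner ℂ fL gL : ℂ)
        = ((‖(inner ℂ fL gL : ℂ)‖^2 : ℝ) : ℂ) := by
      rw [mul_comm, Complex.mul_conj]
      rw [Complex.normSq_eq_norm_sq]
    rw [h2]
    have hcoe : ∀ r : ℝ, (Complex.ofReal r) = @RCLike.ofReal ℂ _ r := fun r => rfl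
    simp only [← hcoe]
    push_cast
    ring
  rw [hdet]
  rw [← Complex.ofReal_sub, Complex.ofReal_ne_zero]
  have : ‖(inner ℂ fL gL : ℂ)‖^2 < (‖fL‖ * ‖gL‖)^2 := by
    refine pow_lt_pow_left₀ hlt (norm_nonneg _) (by norm_num)
  linarith
end
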